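/- arXiv:math/0506582 — 2 statements merged into one kernel-verified Lean document; each statement's English description precedes it below -/
import Mathlib

section
/- If {T_{α,β}} is a Cuntz–Krieger (Λ, Λ^0)-family, then the collection {t_λ := T_{λ, s(λ)} : λ ∈ Λ} is a Cuntz–Krieger Λ-family; that is, it satisfies: the t_v (v ∈ Λ^0) are mutually orthogonal projections, t_λ t_μ = t_{λμ} when s(λ)=r(μ), t_λ* t_μ = Σ_{(α,β) ∈ Λ^min(λ,μ)} t_α t_β*, and Π_{λ∈E}(t_v − t_λ t_λ*) = 0 for all finite exhaustive E ⊆ vΛ. -/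
open scoped BigOperators

/-- A `k`-graph, presented algebraically: a small category whose morphisms
carry a degree in `ℕ^k` satisfying the unique factorisation property.
Vertices (objects) are identified with the identity morphisms; `src`/`rng`
send a morphism to the identity morphism at its source/range. Composition
`comp p q` is only meaningful when `src p = rng q` (i.e. `p q` is the path
`p` followed after `q`, as in `r(pq) = r(p)`, `s(pq) = s(q)`). -/
structure KGraph (k : ℕ) where
  Path : Type
  src : Path → Path
  rng : Path → Path
  comp : Path → Path → Path
  deg : Path → (Fin k → ℕ)
  countable : Countable Path
  deg_src : ∀ p, deg (src p) = 0
  deg_rng : ∀ p, deg (rng p) = 0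
  src_src : ∀ p, src (src p) = src p
  rng_src : ∀ p, rng (src p) = src p
  src_rng : ∀ p, src (rng p) = rng p
  rng_rng : ∀ p, rng (rng p) = rng p
  src_comp : ∀ p q, src p = rng q → src (comp p q) = src q
  rng_comp : ∀ p q, src p = rng q → rng (comp p q) = rng p
  deg_comp : ∀ p q, src p = rng q → deg (comp p q) = deg p + deg q
  comp_assoc : ∀ p q r, src p = rng q → src q = rng r →
    comp (comp p q) r = comp p (comp q r)
  comp_id : ∀ p, comp p (src p) = p
  id_comp : ∀ p, comp (rng p) p = p
  factor : ∀ p m n, deg p = m + n →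
    ∃! x : Path × Path, deg x.1 = m ∧ deg x.2 = n ∧ src x.1 = rng x.2 ∧
      p = comp x.1 x.2

namespace KGraph

variable {k : ℕ} (Λ : KGraph k)

/-- Vertices are the identity morphisms. -/
def IsVertex (p : Λ.Path) : Prop := Λ.src p = p ∧ Λ.rng p = p ∧ Λ.deg p = 0

/-- `Λ^min(l,m)`: pairs `(α,β)` with `lα = mβ` of degree `d(l) ∨ d(m)`. -/
def minExt (l m : Λ.Path) : Set (Λ.Path × Λ.Path) :=
  {x | Λ.src l = Λ.rng x.1 ∧ Λ.src m = Λ.rng x.2 ∧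
    Λ.comp l x.1 = Λ.comp m x.2 ∧ Λ.deg l + Λ.deg x.1 = Λ.deg l ⊔ Λ.deg m}

/-- `Λ^n(l,m)`: common extensions of `l` and `m` of degree `n`. -/
def commonExt (l m : Λ.Path) (n : Fin k → ℕ) : Set (Λ.Path × Λ.Path) :=
  {x | Λ.src l = Λ.rng x.1 ∧ Λ.src m = Λ.rng x.2 ∧
    Λ.comp l x.1 = Λ.comp m x.2 ∧ Λ.deg l + Λ.deg x.1 = n}

/-- `Λ` is finitely aligned if each `Λ^min(l,m)` is finite. -/
def FinitelyAligned : Prop := ∀ l m, (Λ.minExt l m).Finite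

/-- `vΛ`, the paths with range `v`. -/
def vP (v : Λ.Path) : Set Λ.Path := {p | Λ.rng p = v}

/-- `vΛ^n`, the paths with range `v` and degree `n`. -/
def vPn (v : Λ.Path) (n : Fin k → ℕ) : Set Λ.Path := {p | Λ.rng p = v ∧ Λ.deg p = n}

/-- `Λ^n v`, the paths with source `v` and degree `n`. -/
def Pnv (n : Fin k → ℕ) (v : Λ.Path) : Set Λ.Path := {p | Λ.src p = v ∧ Λ.deg p = n}

/-- `E ⊆ vΛ` is exhaustive if every `μ ∈ vΛ` has a minimal common extension
with some member of `E`. -/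
def Exhaustive (v : Λ.Path) (E : Set Λ.Path) : Prop :=
  ∀ m ∈ Λ.vP v, ∃ l ∈ E, (Λ.minExt l m).Nonempty

/-- Row finiteness: each `vΛ^n` is finite. -/
def RowFinite : Prop := ∀ v n, Λ.IsVertex v → (Λ.vPn v n).Finite

/-- No sources: every vertex receives a path of each coordinate degree `e_i`. -/
def NoSources : Prop := ∀ v, Λ.IsVertex v → ∀ i : Fin k,
  (Λ.vPn v (Pi.single i 1)).Nonempty

/-- `vΛ^{≤ n}`. -/
def vPle (v : Λ.Path) (n : Fin k → ℕ) : Set Λ.Path :=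
  {p | Λ.rng p = v ∧ Λ.deg p ≤ n ∧
    ∀ i : Fin k, Λ.deg p i < n i → Λ.vPn (Λ.src p) (Pi.single i 1) = ∅}

/-- A set of vertices is hereditary if it is closed under taking sources of
paths out of it. -/
def Hereditary (H : Set Λ.Path) : Prop :=
  ∀ v ∈ H, ∀ p, Λ.rng p = v → Λ.src p ∈ H

/-- A set of vertices is saturated if any vertex admitting a finite
exhaustive set of paths with sources in `S` lies in `S`. -/
def Saturated (S : Set Λ.Path) : Prop :=
  ∀ v, Λ.IsVertex v →
    (∃ E : Set Λ.Path, E.Finite ∧ E ⊆ Λ.vP v ∧ Λ.Exhaustive v E ∧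
      ∀ p ∈ E, Λ.src p ∈ S) → v ∈ S

/-- The saturation `Σ(X)`: the smallest saturated hereditary set of vertices
containing `X`. -/
def saturation (X : Set Λ.Path) : Set Λ.Path :=
  ⋂₀ {S | X ⊆ S ∧ S ⊆ {v | Λ.IsVertex v} ∧ Λ.Hereditary S ∧ Λ.Saturated S}

end KGraph

namespace KGraph

variable {k : ℕ} (Λ : KGraph k)

variable {A : Type} [NormedRing A] [StarRing A] [CStarRing A]
  [NormedAlgebra ℂ A] [CompleteSpace A] [StarModule ℂ A]

/-- A Cuntz–Krieger `(Λ,X)`-family in a C*-algebra: partial isometries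
`T α β` indexed by pairs of paths with range in `X` and common source,
subject to the relations (i)–(iii) of Definition 3.1. The product relation
(iii) is stated for an arbitrary enumeration (without repetitions) of a
finite exhaustive set, since the factors commute. -/
def CKFamilyX (X : Set Λ.Path) (T : Λ.Path → Λ.Path → A) : Prop :=
  (∀ α β, Λ.rng α ∈ X → Λ.rng β ∈ X → Λ.src α = Λ.src β →
    T α β * star (T α β) * T α β = T α β) ∧
  (∀ α β, Λ.rng α ∈ X → Λ.rng β ∈ X → Λ.src α = Λ.src β →
    star (T α β) = T β α) ∧
  (∀ α β l m, Λ.rng α ∈ X → Λ.rng β ∈ X → Λ.rng l ∈ X → Λ.rng m ∈ X →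
    Λ.src α = Λ.src β → Λ.src l = Λ.src m →
    T α β * T l m =
      ∑ᶠ x : ↥(Λ.minExt β l), T (Λ.comp α (x : Λ.Path × Λ.Path).1)
        (Λ.comp m (x : Λ.Path × Λ.Path).2)) ∧
  (∀ v, v ∈ X → Λ.IsVertex v → ∀ L : List Λ.Path, L.Nodup →
    {l | l ∈ L} ⊆ Λ.vP v → Λ.Exhaustive v {l | l ∈ L} →
    (L.map (fun l => T v v - T l l)).prod = 0)

/-- A Cuntz–Krieger `Λ`-family supported on a subset `S` of the paths of
`Λ` (taking `S` to be all paths gives the usual notion, Definition 2.9). -/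
def CKLambdaFamilyOn (S : Set Λ.Path) (s : Λ.Path → A) : Prop :=
  (∀ v, v ∈ S → Λ.IsVertex v → s v * s v = s v ∧ star (s v) = s v) ∧
  (∀ v w, v ∈ S → w ∈ S → Λ.IsVertex v → Λ.IsVertex w → v ≠ w →
    s v * s w = 0) ∧
  (∀ p q, p ∈ S → q ∈ S → Λ.src p = Λ.rng q → s p * s q = s (Λ.comp p q)) ∧
  (∀ p q, p ∈ S → q ∈ S →
    star (s p) * s q =
      ∑ᶠ x : ↥(Λ.minExt p q), s (x : Λ.Path × Λ.Path).1 *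
        star (s (x : Λ.Path × Λ.Path).2)) ∧
  (∀ v, v ∈ S → Λ.IsVertex v → ∀ L : List Λ.Path, L.Nodup →
    {l | l ∈ L} ⊆ Λ.vP v ∩ S → Λ.Exhaustive v {l | l ∈ L} →
    (L.map (fun l => s v - s l * star (s l))).prod = 0)

/-- A Cuntz–Krieger `Λ`-family. -/
def CKLambdaFamily (s : Λ.Path → A) : Prop :=
  Λ.CKLambdaFamilyOn Set.univ s

/-- The gauge-action scalar `z^{d(α) - d(β)}`. -/
noncomputable def gaugeScalar (z : Fin k → ℂ) (m n : Fin k → ℕ) : ℂ :=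
  ∏ i : Fin k, z i ^ ((m i : ℤ) - (n i : ℤ))

/-- The generated C*-algebra is the closed span of the `T α β`. -/
def GeneratedByX (X : Set Λ.Path) (T : Λ.Path → Λ.Path → A) : Prop :=
  closure (↑(Submodule.span ℂ
    {a : A | ∃ α β, Λ.rng α ∈ X ∧ Λ.rng β ∈ X ∧ Λ.src α = Λ.src β ∧
      a = T α β}) : Set A) = Set.univ

/-- Universality: every Cuntz–Krieger `(Λ,X)`-family in any C*-algebra is
the image of `T` under a unique star-algebra homomorphism. -/
def UniversalX (X : Set Λ.Path) (T : Λ.Path → Λ.Path → A) : Prop :=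
  ∀ (B : Type) (_ : NormedRing B) (_ : StarRing B) (_ : CStarRing B)
    (_ : NormedAlgebra ℂ B) (_ : CompleteSpace B) (_ : StarModule ℂ B)
    (t : Λ.Path → Λ.Path → B), Λ.CKFamilyX X t →
    ∃! φ : A →⋆ₐ[ℂ] B,
      ∀ α β, Λ.rng α ∈ X → Λ.rng β ∈ X → Λ.src α = Λ.src β →
        φ (T α β) = t α β

end KGraph

namespace KGraph

variable {k : ℕ} (Λ : KGraph k)

variable {A : Type} [NormedRing A] [StarRing A] [CStarRing A]
  [NormedAlgebra ℂ A] [CompleteSpace A] [StarModule ℂ A]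

/-- The C*-algebra of a Cuntz–Krieger `Λ`-family supported on `S` is
generated by the family: the closed span of the `s_α s_β^*` is everything. -/
def GeneratedLambdaOn (S : Set Λ.Path) (s : Λ.Path → A) : Prop :=
  closure (↑(Submodule.span ℂ
    {a : A | ∃ p q, p ∈ S ∧ q ∈ S ∧ Λ.src p = Λ.src q ∧
      a = s p * star (s q)}) : Set A) = Set.univ

/-- Universality of a Cuntz–Krieger `Λ`-family supported on `S`. -/
def UniversalLambdaOn (S : Set Λ.Path) (s : Λ.Path → A) : Prop :=
  ∀ (B : Type) (_ : NormedRing B) (_ : StarRing B) (_ : CStarRing B)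
    (_ : NormedAlgebra ℂ B) (_ : CompleteSpace B) (_ : StarModule ℂ B)
    (t : Λ.Path → B), Λ.CKLambdaFamilyOn S t →
    ∃! φ : A →⋆ₐ[ℂ] B, ∀ p ∈ S, φ (s p) = t p

/-- Universality of a Cuntz–Krieger `Λ`-family (`C*(Λ)`). -/
def UniversalLambda (s : Λ.Path → A) : Prop :=
  Λ.UniversalLambdaOn Set.univ s

/-- The closed two-sided ideal of `A` generated by the projections
`{s_v : v ∈ X}` is all of `A`; this says exactly that the corner
`P_X A P_X` is full. -/
def FullCornerIdeal (X : Set Λ.Path) (s : Λ.Path → A) : Prop :=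
  closure (↑(Submodule.span ℂ
    {x : A | ∃ v ∈ X, ∃ a b : A,
      x = a * s v * b ∨ x = a * s v ∨ x = s v * b ∨ x = s v}) : Set A) =
    Set.univ

end KGraph

section Aux

lemma finsum_subtype_empty' {α M : Type*} [AddCommMonoid M] {S : Set α} (h : S = ∅)
    (f : α → M) : (∑ᶠ x : ↥S, f ↑x) = 0 := by
  haveI : IsEmpty ↥S := Set.isEmpty_coe_sort.mpr h
  exact finsum_of_isEmpty _

lemma finsum_subtype_singleton' {α M : Type*} [AddCommMonoid M] {S : Set α} {a : α}
    (h : S = {a}) (f : α → M) : (∑ᶠ x : ↥S, f ↑x) = f a := by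
  subst h
  exact finsum_unique _

namespace KGraph

variable {k : ℕ} (Λ : KGraph k)

lemma isVertex_src (p : Λ.Path) : Λ.IsVertex (Λ.src p) :=
  ⟨Λ.src_src p, Λ.rng_src p, Λ.deg_src p⟩

lemma isVertex_rng (p : Λ.Path) : Λ.IsVertex (Λ.rng p) :=
  ⟨Λ.src_rng p, Λ.rng_rng p, Λ.deg_rng p⟩

lemma deg_zero_isVertex {p : Λ.Path} (h : Λ.deg p = 0) : Λ.IsVertex p := by
  obtain ⟨x, -, hun⟩ := Λ.factor p 0 0 (by simp [h])
  have h1 : (Λ.rng p, p) = x :=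
    hun _ ⟨Λ.deg_rng p, h, (Λ.src_rng p).trans rfl, (Λ.id_comp p).symm⟩
  have h2 : (p, Λ.src p) = x :=
    hun _ ⟨h, Λ.deg_src p, (Λ.rng_src p).symm, (Λ.comp_id p).symm⟩
  have he : (p, Λ.src p) = (Λ.rng p, p) := h2.trans h1.symm
  have e1 : p = Λ.rng p := congrArg Prod.fst he
  have e2 : Λ.src p = p := congrArg Prod.snd he
  exact ⟨e2, e1.symm, h⟩

lemma minExt_src {p q : Λ.Path} (h : Λ.src p = Λ.rng q) :
    Λ.minExt (Λ.src p) q = {(q, Λ.src q)} := by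
  have hsup : Λ.deg (Λ.src p) ⊔ Λ.deg q = Λ.deg q := by
    rw [Λ.deg_src]; exact sup_eq_right.2 zero_le
  ext x
  constructor
  · rintro ⟨h1, h2, h3, h4⟩
    rw [Λ.src_src] at h1
    have hx1 : Λ.comp (Λ.src p) x.1 = x.1 := by rw [h1, Λ.id_comp]
    rw [hx1] at h3
    rw [hsup, Λ.deg_src, zero_add] at h4
    -- h3 : x.1 = comp q x.2, h4 : deg x.1 = deg q
    have hd2 : Λ.deg x.2 = 0 := by
      have := Λ.deg_comp q x.2 h2
      rw [← h3, h4] at this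
      have : Λ.deg q + Λ.deg x.2 = Λ.deg q + 0 := by rw [add_zero]; exact this.symm
      exact add_left_cancel this
    have hv := Λ.deg_zero_isVertex hd2
    have hx2 : x.2 = Λ.src q := by rw [← hv.2.1, h2]
    have hx1' : x.1 = q := by rw [h3, hx2, Λ.comp_id]
    have : x = (x.1, x.2) := rfl
    rw [Set.mem_singleton_iff, this, hx1', hx2]
  · rintro rfl
    refine ⟨by rw [Λ.src_src, h], (Λ.rng_src q).symm, ?_, ?_⟩
    · show Λ.comp (Λ.src p) q = Λ.comp q (Λ.src q)
      rw [h, Λ.id_comp, Λ.comp_id]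
    · show Λ.deg (Λ.src p) + Λ.deg q = _
      rw [hsup, Λ.deg_src, zero_add]

lemma minExt_vertex {v : Λ.Path} (hv : Λ.IsVertex v) :
    Λ.minExt v v = {(v, v)} := by
  have h : Λ.src v = Λ.rng v := hv.1.trans hv.2.1.symm
  have := Λ.minExt_src h
  rw [hv.1] at this
  exact this

lemma minExt_vertex_ne {v w : Λ.Path} (hv : Λ.IsVertex v) (hw : Λ.IsVertex w)
    (hne : v ≠ w) : Λ.minExt v w = ∅ := by
  ext x
  simp only [Set.mem_empty_iff_false, iff_false]
  rintro ⟨h1, h2, h3, -⟩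
  rw [hv.1] at h1; rw [hw.1] at h2
  have hx1 : Λ.comp v x.1 = x.1 := by rw [h1, Λ.id_comp]
  have hx2 : Λ.comp w x.2 = x.2 := by rw [h2, Λ.id_comp]
  rw [hx1, hx2] at h3
  exact hne (h1.trans (h3 ▸ h2.symm))

end KGraph

section Main

variable {k : ℕ} {Λ : KGraph k}
  {A : Type} [NormedRing A] [StarRing A] [CStarRing A]
  [NormedAlgebra ℂ A] [CompleteSpace A] [StarModule ℂ A]
  {T : Λ.Path → Λ.Path → A}

variable (hT : Λ.CKFamilyX {v | Λ.IsVertex v} T)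
include hT

lemma star_T (p : Λ.Path) : star (T p (Λ.src p)) = T (Λ.src p) p :=
  hT.2.1 p (Λ.src p) (Λ.isVertex_rng p) (Λ.isVertex_rng _) (Λ.src_src p).symm

lemma T_mul_star_T (l : Λ.Path) :
    T l (Λ.src l) * star (T l (Λ.src l)) = T l l := by
  rw [star_T hT]
  have h := hT.2.2.1 l (Λ.src l) (Λ.src l) l (Λ.isVertex_rng l) (Λ.isVertex_rng _)
    (Λ.isVertex_rng _) (Λ.isVertex_rng l) (Λ.src_src l).symm (Λ.src_src l)
  rw [h]
  have hset : Λ.minExt (Λ.src l) (Λ.src l) = {(Λ.src l, Λ.src l)} :=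
    Λ.minExt_vertex (Λ.isVertex_src l)
  rw [finsum_subtype_singleton' hset
    (fun y : Λ.Path × Λ.Path => T (Λ.comp l y.1) (Λ.comp l y.2)), Λ.comp_id]

end Main

/-- If `{T_{α,β}}` is a Cuntz–Krieger `(Λ,Λ^0)`-family then
`t_λ := T_{λ,s(λ)}` defines a Cuntz–Krieger `Λ`-family: the vertex
projections are mutually orthogonal, `t_λ t_μ = t_{λμ}` for composable
paths, `t_λ^* t_μ = Σ_{(α,β)∈Λ^min(λ,μ)} t_α t_β^*`, and
`Π_{λ∈E}(t_v − t_λ t_λ^*) = 0` for finite exhaustive `E ⊆ vΛ`. -/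
theorem KGraph.ckFamilyX_gives_ckLambdaFamily {k : ℕ} (Λ : KGraph k)
    (hFA : Λ.FinitelyAligned)
    {A : Type} [NormedRing A] [StarRing A] [CStarRing A]
    [NormedAlgebra ℂ A] [CompleteSpace A] [StarModule ℂ A]
    (T : Λ.Path → Λ.Path → A)
    (hT : Λ.CKFamilyX {v | Λ.IsVertex v} T) :
    Λ.CKLambdaFamily (fun p => T p (Λ.src p)) := by
  have hV : ∀ p : Λ.Path, Λ.rng p ∈ {v | Λ.IsVertex v} := fun p => Λ.isVertex_rng p
  refine ⟨?_, ?_, ?_, ?_, ?_⟩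
  · -- projections
    intro v _ hv
    simp only [hv.1]
    constructor
    · have h := hT.2.2.1 v v v v (hV v) (hV v) (hV v) (hV v) rfl rfl
      rw [h, finsum_subtype_singleton' (Λ.minExt_vertex hv)
        (fun y : Λ.Path × Λ.Path => T (Λ.comp v y.1) (Λ.comp v y.2))]
      have hvv : Λ.comp v v = v := by
        have := Λ.comp_id v; rwa [hv.1] at this
      show T (Λ.comp v v) (Λ.comp v v) = T v v
      rw [hvv]
    · exact hT.2.1 v v (hV v) (hV v) rfl
  · -- orthogonality
    intro v w _ _ hv hw hne
    simp only [hv.1, hw.1]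
    have h := hT.2.2.1 v v w w (hV v) (hV v) (hV w) (hV w) rfl rfl
    rw [h, finsum_subtype_empty' (Λ.minExt_vertex_ne hv hw hne)
      (fun y : Λ.Path × Λ.Path => T (Λ.comp v y.1) (Λ.comp w y.2))]
  · -- composition
    intro p q _ _ hpq
    have h := hT.2.2.1 p (Λ.src p) q (Λ.src q) (hV p) (hV _) (hV q) (hV _)
      (Λ.src_src p).symm (Λ.src_src q).symm
    rw [h, finsum_subtype_singleton' (Λ.minExt_src hpq)
      (fun y : Λ.Path × Λ.Path => T (Λ.comp p y.1) (Λ.comp (Λ.src q) y.2))]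
    show T (Λ.comp p q) (Λ.comp (Λ.src q) (Λ.src q)) = T (Λ.comp p q) (Λ.src (Λ.comp p q))
    have hqq : Λ.comp (Λ.src q) (Λ.src q) = Λ.src q := by
      have := Λ.comp_id (Λ.src q); rwa [Λ.src_src] at this
    rw [hqq, Λ.src_comp p q hpq]
  · -- CK relation
    intro p q _ _
    rw [star_T hT]
    have h := hT.2.2.1 (Λ.src p) p q (Λ.src q) (hV _) (hV p) (hV q) (hV _)
      (Λ.src_src p) (Λ.src_src q).symm
    rw [h]
    refine finsum_congr fun x => ?_
    obtain ⟨h1, h2, h3, -⟩ := x.2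
    have e1 : Λ.comp (Λ.src p) (x : Λ.Path × Λ.Path).1 = (x : Λ.Path × Λ.Path).1 := by
      rw [h1, Λ.id_comp]
    have e2 : Λ.comp (Λ.src q) (x : Λ.Path × Λ.Path).2 = (x : Λ.Path × Λ.Path).2 := by
      rw [h2, Λ.id_comp]
    rw [e1, e2, star_T hT]
    have hss : Λ.src (x : Λ.Path × Λ.Path).1 = Λ.src (x : Λ.Path × Λ.Path).2 := by
      rw [← Λ.src_comp p _ h1, ← Λ.src_comp q _ h2, h3]
    have h' := hT.2.2.1 (x : Λ.Path × Λ.Path).1 (Λ.src (x : Λ.Path × Λ.Path).1)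
      (Λ.src (x : Λ.Path × Λ.Path).2) (x : Λ.Path × Λ.Path).2
      (hV _) (hV _) (hV _) (hV _) (Λ.src_src _).symm (Λ.src_src _)
    have hset : Λ.minExt (Λ.src (x : Λ.Path × Λ.Path).1) (Λ.src (x : Λ.Path × Λ.Path).2)
        = {(Λ.src (x : Λ.Path × Λ.Path).1, Λ.src (x : Λ.Path × Λ.Path).1)} := by
      rw [← hss]; exact Λ.minExt_vertex (Λ.isVertex_src _)
    rw [h', finsum_subtype_singleton' hset
      (fun y : Λ.Path × Λ.Path => T (Λ.comp (x : Λ.Path × Λ.Path).1 y.1)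
        (Λ.comp (x : Λ.Path × Λ.Path).2 y.2))]
    rw [Λ.comp_id, hss, Λ.comp_id]
  · -- Cuntz–Krieger exhaustive relation
    intro v _ hv L hnodup hsub hexh
    have hmap : (L.map (fun l => T v (Λ.src v) - T l (Λ.src l) * star (T l (Λ.src l)))).prod
        = (L.map (fun l => T v v - T l l)).prod := by
      congr 1
      refine List.map_congr_left fun l _ => ?_
      rw [hv.1, T_mul_star_T hT]
    rw [hmap]
    exact hT.2.2.2 v hv hv L hnodup (fun l hl => (hsub hl).1) hexh
end Aux
end

section
/- Let Λ be a finitely aligned k-graph with X ⊆ Λ^0. For any finite set F of spanning elements T_{α,β} with d(α)=d(β) in the core of C*(Λ,X), there exists a finite set F̄ ⊇ F of such spanning elements whose linear span is closed under multiplication and adjoints; consequently C*(F) is finite dimensional. -/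
open scoped BigOperators

namespace KGraph

section PathCalculus

variable {k : ℕ} {Λ : KGraph k}

lemma degZero {p : Λ.Path} (h : Λ.deg p = 0) : Λ.src p = p ∧ Λ.rng p = p := by
  have hf := Λ.factor p 0 0 (by simpa using h)
  have e : ((Λ.rng p, p) : Λ.Path × Λ.Path) = (p, Λ.src p) :=
    hf.unique ⟨Λ.deg_rng p, h, Λ.src_rng p, (Λ.id_comp p).symm⟩
      ⟨h, Λ.deg_src p, (Λ.rng_src p).symm, (Λ.comp_id p).symm⟩
  have e1 : Λ.rng p = p := congrArg Prod.fst e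
  have e2 : p = Λ.src p := congrArg Prod.snd e
  exact ⟨e2.symm, e1⟩

lemma compVertexRight {p x : Λ.Path} (hx : Λ.deg x = 0) (hc : Λ.src p = Λ.rng x) :
    Λ.comp p x = p := by
  have h := degZero hx
  have : x = Λ.src p := by rw [hc, h.2]
  rw [this, Λ.comp_id p]

lemma compVertexLeft {p x : Λ.Path} (hx : Λ.deg x = 0) (hc : Λ.src x = Λ.rng p) :
    Λ.comp x p = p := by
  have h := degZero hx
  have : x = Λ.rng p := by rw [← hc, h.1]
  rw [this, Λ.id_comp p]

/-- Uniqueness of factorizations with equal head degree. -/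
lemma compUnique {h t h' t' : Λ.Path} (cht : Λ.src h = Λ.rng t)
    (cht' : Λ.src h' = Λ.rng t') (hdeg : Λ.deg h = Λ.deg h')
    (heq : Λ.comp h t = Λ.comp h' t') : h = h' ∧ t = t' := by
  have hdt : Λ.deg t = Λ.deg t' := by
    have d1 := Λ.deg_comp h t cht
    have d2 := Λ.deg_comp h' t' cht'
    rw [heq, d2, hdeg] at d1
    exact (add_left_cancel d1.symm)
  have hf := Λ.factor (Λ.comp h t) (Λ.deg h) (Λ.deg t) (Λ.deg_comp h t cht)
  have e : ((h, t) : Λ.Path × Λ.Path) = (h', t') :=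
    hf.unique ⟨rfl, rfl, cht, rfl⟩ ⟨hdeg.symm, hdt.symm, cht', heq⟩
  exact ⟨congrArg Prod.fst e, congrArg Prod.snd e⟩

/-- Existence of head/tail factorization at any degree `e ≤ deg p`. -/
lemma existsHead {p : Λ.Path} {e : Fin k → ℕ} (he : e ≤ Λ.deg p) :
    ∃ h t, Λ.deg h = e ∧ Λ.deg t = Λ.deg p - e ∧ Λ.src h = Λ.rng t ∧
      p = Λ.comp h t := by
  obtain ⟨x, hx, -⟩ := Λ.factor p e (Λ.deg p - e)
    (by funext i; have hei : e i ≤ Λ.deg p i := he i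
        simp only [Pi.add_apply, Pi.sub_apply]; omega)
  exact ⟨x.1, x.2, hx.1, hx.2.1, hx.2.2.1, hx.2.2.2⟩

end PathCalculus

/-- The closure of a finite set of index pairs under adjoints and the pairs
appearing in products of core spanning elements. -/
inductive Gen {k : ℕ} (Λ : KGraph k) (F : Finset (Λ.Path × Λ.Path)) :
    (Λ.Path × Λ.Path) → Prop
  | base {x} : x ∈ F → Gen Λ F x
  | swap {a b} : Gen Λ F (a, b) → Gen Λ F (b, a)
  | child {a b c d} {x : Λ.Path × Λ.Path} : Gen Λ F (a, b) → Gen Λ F (c, d) →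
      x ∈ Λ.minExt b c → Gen Λ F (Λ.comp a x.1, Λ.comp d x.2)

section GenLemmas

variable {k : ℕ} {Λ : KGraph k} {X : Set Λ.Path} {F : Finset (Λ.Path × Λ.Path)}

/-- Well-formedness of an index pair. -/
def PairWf (Λ : KGraph k) (X : Set Λ.Path) (p : Λ.Path × Λ.Path) : Prop :=
  Λ.rng p.1 ∈ X ∧ Λ.rng p.2 ∈ X ∧ Λ.src p.1 = Λ.src p.2 ∧ Λ.deg p.1 = Λ.deg p.2

lemma gen_wf (hF : ∀ x ∈ F, PairWf Λ X x) {p : Λ.Path × Λ.Path}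
    (hp : Gen Λ F p) : PairWf Λ X p := by
  induction hp with
  | base hx => exact hF _ hx
  | swap h ih => exact ⟨ih.2.1, ih.1, ih.2.2.1.symm, ih.2.2.2.symm⟩
  | @child a b c d x h1 h2 hx ih1 ih2 =>
    obtain ⟨hx1, hx2, hx3, hx4⟩ := hx
    have ca : Λ.src a = Λ.rng x.1 := ih1.2.2.1.trans hx1
    have cd : Λ.src d = Λ.rng x.2 := ih2.2.2.1.symm.trans hx2
    refine ⟨?_, ?_, ?_, ?_⟩
    · rw [Λ.rng_comp a x.1 ca]; exact ih1.1
    · rw [Λ.rng_comp d x.2 cd]; exact ih2.2.1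
    · rw [Λ.src_comp a x.1 ca, Λ.src_comp d x.2 cd]
      have e1 := Λ.src_comp b x.1 hx1
      have e2 := Λ.src_comp c x.2 hx2
      rw [← e1, ← e2, hx3]
    · rw [Λ.deg_comp a x.1 ca, Λ.deg_comp d x.2 cd, ih1.2.2.2]
      have e1 := Λ.deg_comp b x.1 hx1
      have e2 := Λ.deg_comp c x.2 hx2
      rw [← e1, hx3, e2, ih2.2.2.2]

lemma gen_deg_le (hF : ∀ x ∈ F, PairWf Λ X x) {p : Λ.Path × Λ.Path}
    (hp : Gen Λ F p) : Λ.deg p.1 ≤ fun i => F.sup fun x => Λ.deg x.1 i := by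
  induction hp with
  | base hx => exact fun i => Finset.le_sup (f := fun x => Λ.deg x.1 i) hx
  | swap h ih =>
    have := (gen_wf hF h).2.2.2
    intro i; simpa [← this] using ih i
  | @child a b c d x h1 h2 hx ih1 ih2 =>
    obtain ⟨hx1, hx2, hx3, hx4⟩ := hx
    have wf1 := gen_wf hF h1
    have wf2 := gen_wf hF h2
    have ca : Λ.src a = Λ.rng x.1 := wf1.2.2.1.trans hx1
    have hd : Λ.deg (Λ.comp a x.1) = Λ.deg a ⊔ Λ.deg c := by
      rw [Λ.deg_comp a x.1 ca, wf1.2.2.2, hx4, ← wf1.2.2.2]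
    intro i
    rw [hd]
    have i1 : Λ.deg a i ≤ F.sup (fun x => Λ.deg x.1 i) := ih1 i
    have i2 : Λ.deg c i ≤ F.sup (fun x => Λ.deg x.1 i) := ih2 i
    simp only [Pi.sup_apply]
    omega

end GenLemmas

end KGraph

namespace KGraph

section Finiteness

variable {k : ℕ} {Λ : KGraph k} {X : Set Λ.Path} {F : Finset (Λ.Path × Λ.Path)}

lemma tails_finite (w : Λ.Path) :
    Set.Finite {t : Λ.Path | ∃ hd, Λ.src hd = Λ.rng t ∧ w = Λ.comp hd t} := by
  apply Set.Finite.of_finite_image (f := Λ.deg)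
  · apply Set.Finite.subset (Set.finite_Icc (0 : Fin k → ℕ) (Λ.deg w))
    rintro _ ⟨t, ⟨hd, hc, hw⟩, rfl⟩
    refine Set.mem_Icc.mpr ⟨fun i => Nat.zero_le _, ?_⟩
    rw [hw, Λ.deg_comp hd t hc]; exact le_add_self
  · rintro t ⟨hd, hc, hw⟩ t' ⟨hd', hc', hw'⟩ hdeg
    have d1 := Λ.deg_comp hd t hc
    have d2 := Λ.deg_comp hd' t' hc'
    rw [← hw] at d1
    rw [← hw'] at d2
    have hdh : Λ.deg hd = Λ.deg hd' := by
      funext i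
      have e1 := congrFun d1 i
      have e2 := congrFun d2 i
      have e3 := congrFun hdeg i
      simp only [Pi.add_apply] at e1 e2
      omega
    exact (compUnique hc hc' hdh (hw.symm.trans hw')).2

lemma gen_finite (hFA : Λ.FinitelyAligned) (hF : ∀ x ∈ F, PairWf Λ X x) :
    Set.Finite {p : Λ.Path × Λ.Path | Gen Λ F p} := by
  classical
  have hwf : ∀ {p : Λ.Path × Λ.Path}, Gen Λ F p → PairWf Λ X p :=
    fun hp => gen_wf hF hp
  have key : ∀ (n : ℕ) (m : Fin k → ℕ), (∑ i, m i) = n →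
      Set.Finite {p : Λ.Path × Λ.Path | Gen Λ F p ∧ Λ.deg p.1 = m} := by
    intro n
    induction n using Nat.strong_induction_on with
    | _ n ih =>
    intro m hm
    subst hm
    -- the pairs of strictly smaller degree
    set Glt := {p : Λ.Path × Λ.Path | Gen Λ F p ∧ Λ.deg p.1 ≤ m ∧ Λ.deg p.1 ≠ m}
      with hGltdef
    have hGlt : Set.Finite Glt := by
      have hsub : Glt ⊆ ⋃ b ∈ Set.Icc (0 : Fin k → ℕ) m \ {m},
          {p : Λ.Path × Λ.Path | Gen Λ F p ∧ Λ.deg p.1 = b} := by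
        rintro p ⟨hp, hle, hne⟩
        exact Set.mem_biUnion ⟨Set.mem_Icc.mpr ⟨fun i => Nat.zero_le _, hle⟩, hne⟩
          ⟨hp, rfl⟩
      refine Set.Finite.subset (Set.Finite.biUnion ((Set.finite_Icc _ _).diff) ?_) hsub
      rintro b ⟨hb, hbne⟩
      have hble : b ≤ m := (Set.mem_Icc.mp hb).2
      have hbne' : b ≠ m := hbne
      refine ih (∑ i, b i) ?_ b rfl
      obtain ⟨j, hj⟩ := Function.ne_iff.mp hbne'
      exact Finset.sum_lt_sum (fun i _ => hble i)
        ⟨j, Finset.mem_univ j, lt_of_le_of_ne (hble j) hj⟩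
    -- components of strictly smaller pairs
    set Low := {c : Λ.Path | ∃ p ∈ Glt, c = p.1 ∨ c = p.2} with hLowdef
    have hLow : Set.Finite Low := by
      apply Set.Finite.subset ((hGlt.image Prod.fst).union (hGlt.image Prod.snd))
      rintro c ⟨p, hp, rfl | rfl⟩
      · exact Or.inl ⟨p, hp, rfl⟩
      · exact Or.inr ⟨p, hp, rfl⟩
    -- children of two strictly smaller pairs
    set Hm := ⋃ p ∈ Glt, ⋃ q ∈ Glt, (fun x : Λ.Path × Λ.Path =>
        (Λ.comp p.1 x.1, Λ.comp q.2 x.2)) '' (Λ.minExt p.2 q.1) with hHmdef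
    have hHm : Set.Finite Hm := hGlt.biUnion fun p _ => hGlt.biUnion fun q _ =>
      (hFA p.2 q.1).image _
    -- base components at level m
    set C0 := {c : Λ.Path | ∃ x ∈ F, c = x.1 ∨ c = x.2} ∪
        {c : Λ.Path | ∃ r ∈ Hm, c = r.1 ∨ c = r.2} with hC0def
    have hC0 : Set.Finite C0 := by
      apply Set.Finite.union
      · apply Set.Finite.subset ((F.finite_toSet.image Prod.fst).union
          (F.finite_toSet.image Prod.snd))
        rintro c ⟨x, hx, rfl | rfl⟩
        · exact Or.inl ⟨x, hx, rfl⟩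
        · exact Or.inr ⟨x, hx, rfl⟩
      · apply Set.Finite.subset ((hHm.image Prod.fst).union (hHm.image Prod.snd))
        rintro c ⟨x, hx, rfl | rfl⟩
        · exact Or.inl ⟨x, hx, rfl⟩
        · exact Or.inr ⟨x, hx, rfl⟩
    -- minimal common extensions of low components
    set Z := ⋃ a ∈ Low, ⋃ b ∈ Low, (fun x : Λ.Path × Λ.Path => Λ.comp a x.1) ''
        (Λ.minExt a b) with hZdef
    have hZ : Set.Finite Z := hLow.biUnion fun a _ => hLow.biUnion fun b _ =>
      (hFA a b).image _
    set W := C0 ∪ Z with hWdef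
    have hW : Set.Finite W := hC0.union hZ
    set TW := ⋃ w ∈ W, {t : Λ.Path | ∃ hd, Λ.src hd = Λ.rng t ∧ w = Λ.comp hd t}
      with hTWdef
    have hTW : Set.Finite TW := hW.biUnion fun w _ => tails_finite w
    set V := C0 ∪ ⋃ b ∈ Low, (fun t => Λ.comp b t) '' TW with hVdef
    have hV : Set.Finite V := hC0.union (hLow.biUnion fun b _ => hTW.image _)
    -- the invariant: INV c := c ∈ C0 ∨ ∃ q ∈ Glt, ∃ y, ...
    have hinvV : ∀ c : Λ.Path,
        (c ∈ C0 ∨ ∃ q ∈ Glt, ∃ y, Λ.src q.2 = Λ.rng y ∧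
          c = Λ.comp q.2 y ∧ Λ.comp q.1 y ∈ W) → c ∈ V := by
      rintro c (hc | ⟨q, hq, y, hcy, rfl, hWy⟩)
      · exact Or.inl hc
      · refine Or.inr (Set.mem_biUnion (show q.2 ∈ Low from ⟨q, hq, Or.inr rfl⟩)
          ⟨y, ?_, rfl⟩)
        refine Set.mem_biUnion hWy ⟨q.1, ?_, rfl⟩
        rw [(hwf hq.1).2.2.1]; exact hcy
    -- the swap lemma
    have swapLemma : ∀ (c : Λ.Path) (r : Λ.Path × Λ.Path) (y'' : Λ.Path),
        (c ∈ C0 ∨ ∃ q ∈ Glt, ∃ y, Λ.src q.2 = Λ.rng y ∧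
          c = Λ.comp q.2 y ∧ Λ.comp q.1 y ∈ W) →
        Λ.deg c = m → r ∈ Glt → Λ.src r.1 = Λ.rng y'' → c = Λ.comp r.1 y'' →
        (Λ.comp r.2 y'' ∈ C0 ∨ ∃ q ∈ Glt, ∃ y, Λ.src q.2 = Λ.rng y ∧
          Λ.comp r.2 y'' = Λ.comp q.2 y ∧ Λ.comp q.1 y ∈ W) := by
      intro c r y'' hINVc hdc hrG hcy'' hceq
      obtain ⟨genr, hrle, hrne⟩ := hrG
      have wfr := hwf genr
      have hcr2y : Λ.src r.2 = Λ.rng y'' := by rw [← wfr.2.2.1]; exact hcy''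
      rcases hINVc with hc0 | ⟨q, hqG, y, hqy, hcq, hqW⟩
      · refine Or.inr ⟨r, ⟨genr, hrle, hrne⟩, y'', hcr2y, rfl, ?_⟩
        rw [← hceq]; exact Or.inl hc0
      · obtain ⟨genq, hqle, hqne⟩ := hqG
        have wfq := hwf genq
        have hdq2 : Λ.deg q.2 ≤ m := by rw [← wfq.2.2.2]; exact hqle
        have hdr1 : Λ.deg r.1 ≤ m := hrle
        have he : Λ.deg q.2 ⊔ Λ.deg r.1 ≤ Λ.deg c := by
          rw [hdc]; exact sup_le hdq2 hdr1
        obtain ⟨h, t, hdh, hdt, hht, hcht⟩ := existsHead he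
        -- factor h at deg q.2
        have hq2h : Λ.deg q.2 ≤ Λ.deg h := by rw [hdh]; exact le_sup_left
        obtain ⟨h₁, h₂, hd1, hd2, h12, hh⟩ := existsHead hq2h
        have hsrch : Λ.src h = Λ.src h₂ := by rw [hh, Λ.src_comp h₁ h₂ h12]
        have hh2t : Λ.src h₂ = Λ.rng t := by rw [← hsrch]; exact hht
        have hcassoc : c = Λ.comp h₁ (Λ.comp h₂ t) := by
          rw [hcht, hh, Λ.comp_assoc h₁ h₂ t h12 hh2t]
        have hrngh2t : Λ.rng (Λ.comp h₂ t) = Λ.rng h₂ := Λ.rng_comp h₂ t hh2t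
        obtain ⟨hq2h1, hyeq⟩ := compUnique (h := q.2) (t := y) (h' := h₁)
          (t' := Λ.comp h₂ t) hqy (by rw [hrngh2t]; exact h12) hd1.symm
          (hcq.symm.trans hcassoc)
        -- factor h at deg r.1
        have hr1h : Λ.deg r.1 ≤ Λ.deg h := by rw [hdh]; exact le_sup_right
        obtain ⟨g₁, g₂, gd1, gd2, g12, gh⟩ := existsHead hr1h
        have hsrcg : Λ.src h = Λ.src g₂ := by rw [gh, Λ.src_comp g₁ g₂ g12]
        have hg2t : Λ.src g₂ = Λ.rng t := by rw [← hsrcg]; exact hht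
        have hcassoc' : c = Λ.comp g₁ (Λ.comp g₂ t) := by
          rw [hcht, gh, Λ.comp_assoc g₁ g₂ t g12 hg2t]
        have hrngg2t : Λ.rng (Λ.comp g₂ t) = Λ.rng g₂ := Λ.rng_comp g₂ t hg2t
        obtain ⟨hr1g1, hy''eq⟩ := compUnique (h := r.1) (t := y'') (h' := g₁)
          (t' := Λ.comp g₂ t) hcy'' (by rw [hrngg2t]; exact g12) gd1.symm
          (hceq.symm.trans hcassoc')
        have hcq2h2 : Λ.src q.2 = Λ.rng h₂ := by rw [hq2h1]; exact h12
        have hcr1g2 : Λ.src r.1 = Λ.rng g₂ := by rw [hr1g1]; exact g12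
        have hhq : h = Λ.comp q.2 h₂ := by rw [hh, hq2h1]
        have hhr : h = Λ.comp r.1 g₂ := by rw [gh, hr1g1]
        have e1 : Λ.deg h = Λ.deg q.2 + Λ.deg h₂ := by
          rw [hhq]; exact Λ.deg_comp q.2 h₂ hcq2h2
        have hminE : ((h₂, g₂) : Λ.Path × Λ.Path) ∈ Λ.minExt q.2 r.1 := by
          refine ⟨hcq2h2, hcr1g2, ?_, ?_⟩
          · rw [← hhq, ← hhr]
          · rw [← e1, hdh]
        by_cases hem : Λ.deg q.2 ⊔ Λ.deg r.1 = m
        · -- c itself is a minimal common extension, c ∈ Z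
          have htv : Λ.deg t = 0 := by
            funext i
            have e2 := congrFun hdt i
            have e3 := congrFun hdh i
            have e4 := congrFun hdc i
            have e5 := congrFun hem i
            simp only [Pi.sub_apply, Pi.zero_apply] at *
            omega
          have hch : c = h := by rw [hcht, compVertexRight htv hht]
          have hcZ : c ∈ Z := by
            rw [hch]
            refine Set.mem_biUnion
              (show q.2 ∈ Low from ⟨q, ⟨genq, hqle, hqne⟩, Or.inr rfl⟩) ?_
            refine Set.mem_biUnion
              (show r.1 ∈ Low from ⟨r, ⟨genr, hrle, hrne⟩, Or.inl rfl⟩) ?_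
            exact ⟨(h₂, g₂), hminE, hhq.symm⟩
          refine Or.inr ⟨r, ⟨genr, hrle, hrne⟩, y'', hcr2y, rfl, ?_⟩
          rw [← hceq]; exact Or.inr hcZ
        · -- produce the child pair of q and r
          have genq' : Gen Λ F (q.1, q.2) := by rw [Prod.mk.eta]; exact genq
          have genr' : Gen Λ F (r.1, r.2) := by rw [Prod.mk.eta]; exact genr
          have genC : Gen Λ F (Λ.comp q.1 h₂, Λ.comp r.2 g₂) :=
            Gen.child genq' genr' hminE
          have hcq1 : Λ.src q.1 = Λ.rng h₂ := by rw [wfq.2.2.1]; exact hcq2h2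
          have hcr2 : Λ.src r.2 = Λ.rng g₂ := by rw [← wfr.2.2.1]; exact hcr1g2
          have hdegC : Λ.deg (Λ.comp q.1 h₂) = Λ.deg q.2 ⊔ Λ.deg r.1 := by
            rw [Λ.deg_comp q.1 h₂ hcq1, wfq.2.2.2, ← e1, hdh]
          have hCG : (Λ.comp q.1 h₂, Λ.comp r.2 g₂) ∈ Glt := by
            refine ⟨genC, ?_, ?_⟩
            · show Λ.deg (Λ.comp q.1 h₂) ≤ m
              rw [hdegC]; exact sup_le hdq2 hdr1
            · show Λ.deg (Λ.comp q.1 h₂) ≠ m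
              rw [hdegC]; exact hem
          refine Or.inr ⟨(Λ.comp q.1 h₂, Λ.comp r.2 g₂), hCG, t, ?_, ?_, ?_⟩
          · show Λ.src (Λ.comp r.2 g₂) = Λ.rng t
            rw [Λ.src_comp r.2 g₂ hcr2]; exact hg2t
          · show Λ.comp r.2 y'' = Λ.comp (Λ.comp r.2 g₂) t
            rw [hy''eq, Λ.comp_assoc r.2 g₂ t hcr2 hg2t]
          · show Λ.comp (Λ.comp q.1 h₂) t ∈ W
            rw [Λ.comp_assoc q.1 h₂ t hcq1 hh2t, ← hyeq]; exact hqW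
    -- the main claim: all components at level m satisfy the invariant
    have main : ∀ p : Λ.Path × Λ.Path, Gen Λ F p → Λ.deg p.1 = m →
        (p.1 ∈ C0 ∨ ∃ q ∈ Glt, ∃ y, Λ.src q.2 = Λ.rng y ∧
          p.1 = Λ.comp q.2 y ∧ Λ.comp q.1 y ∈ W) ∧
        (p.2 ∈ C0 ∨ ∃ q ∈ Glt, ∃ y, Λ.src q.2 = Λ.rng y ∧
          p.2 = Λ.comp q.2 y ∧ Λ.comp q.1 y ∈ W) := by
      intro p hp
      induction hp with
      | @base x hx =>
        intro _
        exact ⟨Or.inl (Or.inl ⟨x, hx, Or.inl rfl⟩),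
          Or.inl (Or.inl ⟨x, hx, Or.inr rfl⟩)⟩
      | @swap a b h ihs =>
        intro hd
        have hd' : Λ.deg a = m := by rw [(hwf h).2.2.2]; exact hd
        exact ⟨(ihs hd').2, (ihs hd').1⟩
      | @child a b c d x h1 h2 hx ih1 ih2 =>
        intro hd
        obtain ⟨hx1, hx2, hx3, hx4⟩ := hx
        have wfP := hwf h1
        have wfQ := hwf h2
        have ca : Λ.src a = Λ.rng x.1 := wfP.2.2.1.trans hx1
        have cd : Λ.src d = Λ.rng x.2 := wfQ.2.2.1.symm.trans hx2
        have hda : Λ.deg a + Λ.deg x.1 = m := by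
          rw [← Λ.deg_comp a x.1 ca]; exact hd
        have hdc : Λ.deg c + Λ.deg x.2 = m := by
          rw [← Λ.deg_comp c x.2 hx2, ← hx3, Λ.deg_comp b x.1 hx1, ← wfP.2.2.2]
          exact hda
        have hm' : Λ.deg a ⊔ Λ.deg c = m := by
          rw [← hda, wfP.2.2.2, hx4, ← wfP.2.2.2]
        have hale : Λ.deg a ≤ m := by rw [← hm']; exact le_sup_left
        have hcle : Λ.deg c ≤ m := by rw [← hm']; exact le_sup_right
        show (Λ.comp a x.1 ∈ C0 ∨ _) ∧ (Λ.comp d x.2 ∈ C0 ∨ _)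
        by_cases hA : Λ.deg a = m <;> by_cases hC : Λ.deg c = m
        · have hx10 : Λ.deg x.1 = 0 := by
            funext i
            have e1 := congrFun hda i
            have e2 := congrFun hA i
            simp only [Pi.add_apply, Pi.zero_apply] at *
            omega
          have hx20 : Λ.deg x.2 = 0 := by
            funext i
            have e1 := congrFun hdc i
            have e2 := congrFun hC i
            simp only [Pi.add_apply, Pi.zero_apply] at *
            omega
          rw [compVertexRight hx10 ca, compVertexRight hx20 cd]
          exact ⟨(ih1 hA).1, (ih2 hC).2⟩
        · have hx10 : Λ.deg x.1 = 0 := by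
            funext i
            have e1 := congrFun hda i
            have e2 := congrFun hA i
            simp only [Pi.add_apply, Pi.zero_apply] at *
            omega
          have hbeq : b = Λ.comp c x.2 := by
            rw [← hx3, compVertexRight hx10 hx1]
          have hdb : Λ.deg b = m := by rw [← wfP.2.2.2]; exact hA
          have hQG : (c, d) ∈ Glt := ⟨h2, hcle, hC⟩
          have hswap := swapLemma b (c, d) x.2 (ih1 hA).2 hdb hQG hx2 hbeq
          rw [compVertexRight hx10 ca]
          exact ⟨(ih1 hA).1, hswap⟩
        · have hx20 : Λ.deg x.2 = 0 := by
            funext i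
            have e1 := congrFun hdc i
            have e2 := congrFun hC i
            simp only [Pi.add_apply, Pi.zero_apply] at *
            omega
          have hceq : c = Λ.comp b x.1 := by
            rw [hx3, compVertexRight hx20 hx2]
          have hPG : (b, a) ∈ Glt := by
            refine ⟨Gen.swap h1, ?_, ?_⟩
            · show Λ.deg b ≤ m
              rw [← wfP.2.2.2]; exact hale
            · show Λ.deg b ≠ m
              rw [← wfP.2.2.2]; exact hA
          have hswap := swapLemma c (b, a) x.1 (ih2 hC).1 hC hPG hx1 hceq
          rw [compVertexRight hx20 cd]
          exact ⟨hswap, (ih2 hC).2⟩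
        · have hPG : (a, b) ∈ Glt := ⟨h1, hale, hA⟩
          have hQG : (c, d) ∈ Glt := ⟨h2, hcle, hC⟩
          have hmem : (Λ.comp a x.1, Λ.comp d x.2) ∈ Hm :=
            Set.mem_biUnion hPG (Set.mem_biUnion hQG ⟨x, ⟨hx1, hx2, hx3, hx4⟩, rfl⟩)
          exact ⟨Or.inl (Or.inr ⟨_, hmem, Or.inl rfl⟩),
            Or.inl (Or.inr ⟨_, hmem, Or.inr rfl⟩)⟩
    apply Set.Finite.subset (hV.prod hV)
    rintro p ⟨hp, hd⟩
    have h := main p hp hd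
    exact ⟨hinvV _ h.1, hinvV _ h.2⟩
  apply Set.Finite.subset (Set.Finite.biUnion
    (Set.finite_Icc (0 : Fin k → ℕ) (fun i => F.sup fun x => Λ.deg x.1 i))
    (fun b _ => key (∑ i, b i) b rfl))
  intro p hp
  exact Set.mem_biUnion
    (Set.mem_Icc.mpr ⟨fun i => Nat.zero_le _, gen_deg_le hF hp⟩) ⟨hp, rfl⟩

end Finiteness

end KGraph

/-- For any finite set `F` of spanning elements `T_{α,β}` with
`d(α) = d(β)` of the core, there is a finite superset `F̄` of index pairs
whose spanned subspace is closed under multiplication and adjoints; hence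
the C*-algebra generated by `F` is contained in a finite-dimensional
star-subalgebra, so it is finite dimensional. -/
theorem KGraph.core_finitely_generated_finite_dimensional {k : ℕ}
    (Λ : KGraph k) (hFA : Λ.FinitelyAligned)
    {A : Type} [NormedRing A] [StarRing A] [CStarRing A]
    [NormedAlgebra ℂ A] [CompleteSpace A] [StarModule ℂ A]
    (X : Set Λ.Path) (T : Λ.Path → Λ.Path → A) (hT : Λ.CKFamilyX X T)
    (F : Finset (Λ.Path × Λ.Path))
    (hF : ∀ x ∈ F, Λ.rng x.1 ∈ X ∧ Λ.rng x.2 ∈ X ∧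
      Λ.src x.1 = Λ.src x.2 ∧ Λ.deg x.1 = Λ.deg x.2) :
    ∃ Fbar : Finset (Λ.Path × Λ.Path), F ⊆ Fbar ∧
      (∀ x ∈ Fbar, Λ.rng x.1 ∈ X ∧ Λ.rng x.2 ∈ X ∧
        Λ.src x.1 = Λ.src x.2 ∧ Λ.deg x.1 = Λ.deg x.2) ∧
      (∀ a ∈ Submodule.span ℂ
          ((fun x : Λ.Path × Λ.Path => T x.1 x.2) '' (↑Fbar : Set (Λ.Path × Λ.Path))),
        ∀ b ∈ Submodule.span ℂ
          ((fun x : Λ.Path × Λ.Path => T x.1 x.2) '' (↑Fbar : Set (Λ.Path × Λ.Path))),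
        a * b ∈ Submodule.span ℂ
          ((fun x : Λ.Path × Λ.Path => T x.1 x.2) '' (↑Fbar : Set (Λ.Path × Λ.Path)))) ∧
      (∀ a ∈ Submodule.span ℂ
          ((fun x : Λ.Path × Λ.Path => T x.1 x.2) '' (↑Fbar : Set (Λ.Path × Λ.Path))),
        star a ∈ Submodule.span ℂ
          ((fun x : Λ.Path × Λ.Path => T x.1 x.2) '' (↑Fbar : Set (Λ.Path × Λ.Path)))) ∧
      ∃ S : NonUnitalStarSubalgebra ℂ A, FiniteDimensional ℂ S ∧
        ∀ x ∈ F, T x.1 x.2 ∈ S := by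
    classical
  obtain ⟨hT1, hT2, hT3, hT4⟩ := hT
  have hFwf : ∀ x ∈ F, PairWf Λ X x := fun x hx => hF x hx
  have hGfin := gen_finite (X := X) hFA hFwf
  set Fbar := hGfin.toFinset with hFbardef
  have hmemFbar : ∀ p : Λ.Path × Λ.Path, p ∈ Fbar ↔ Gen Λ F p := by
    intro p
    rw [hFbardef, Set.Finite.mem_toFinset]
    rfl
  have hFsub : F ⊆ Fbar := fun x hx => (hmemFbar x).mpr (Gen.base hx)
  have hwfbar : ∀ x ∈ Fbar, Λ.rng x.1 ∈ X ∧ Λ.rng x.2 ∈ X ∧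
      Λ.src x.1 = Λ.src x.2 ∧ Λ.deg x.1 = Λ.deg x.2 :=
    fun x hx => gen_wf hFwf ((hmemFbar x).mp hx)
  set img := (fun x : Λ.Path × Λ.Path => T x.1 x.2) ''
    (↑Fbar : Set (Λ.Path × Λ.Path)) with himgdef
  set M := Submodule.span ℂ img with hMdef
  have hgen : ∀ p ∈ Fbar, ∀ q ∈ Fbar, T p.1 p.2 * T q.1 q.2 ∈ M := by
    intro p hp q hq
    have wfp := hwfbar p hp
    have wfq := hwfbar q hq
    rw [hT3 p.1 p.2 q.1 q.2 wfp.1 wfp.2.1 wfq.1 wfq.2.1 wfp.2.2.1 wfq.2.2.1]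
    haveI : Fintype ↥(Λ.minExt p.2 q.1) := (hFA p.2 q.1).fintype
    rw [finsum_eq_sum_of_fintype]
    apply Submodule.sum_mem
    intro x _
    apply Submodule.subset_span
    refine ⟨(Λ.comp p.1 (x : Λ.Path × Λ.Path).1,
      Λ.comp q.2 (x : Λ.Path × Λ.Path).2), ?_, rfl⟩
    apply (hmemFbar _).mpr
    have gp : Gen Λ F (p.1, p.2) := by rw [Prod.mk.eta]; exact (hmemFbar p).mp hp
    have gq : Gen Λ F (q.1, q.2) := by rw [Prod.mk.eta]; exact (hmemFbar q).mp hq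
    exact Gen.child gp gq x.2
  have hmulgen : ∀ g ∈ img, ∀ b ∈ M, g * b ∈ M := by
    rintro g ⟨p, hp, rfl⟩ b hb
    induction hb using Submodule.span_induction with
    | mem x hx =>
      obtain ⟨q, hq, rfl⟩ := hx
      exact hgen p hp q hq
    | zero => rw [mul_zero]; exact zero_mem M
    | add x y hx hy ihx ihy => rw [mul_add]; exact add_mem ihx ihy
    | smul c x hx ihx => rw [mul_smul_comm]; exact Submodule.smul_mem M c ihx
  have hmul : ∀ a ∈ M, ∀ b ∈ M, a * b ∈ M := by
    intro a ha b hb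
    induction ha using Submodule.span_induction with
    | mem x hx => exact hmulgen x hx b hb
    | zero => rw [zero_mul]; exact zero_mem M
    | add x y hx hy ihx ihy => rw [add_mul]; exact add_mem ihx ihy
    | smul c x hx ihx => rw [smul_mul_assoc]; exact Submodule.smul_mem M c ihx
  have hstar : ∀ a ∈ M, star a ∈ M := by
    intro a ha
    induction ha using Submodule.span_induction with
    | mem x hx =>
      obtain ⟨p, hp, rfl⟩ := hx
      have wfp := hwfbar p hp
      rw [hT2 p.1 p.2 wfp.1 wfp.2.1 wfp.2.2.1]
      refine Submodule.subset_span ⟨(p.2, p.1), ?_, rfl⟩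
      exact (hmemFbar _).mpr (Gen.swap (by rw [Prod.mk.eta]; exact (hmemFbar p).mp hp))
    | zero => rw [star_zero]; exact zero_mem M
    | add x y hx hy ihx ihy => rw [star_add]; exact add_mem ihx ihy
    | smul c x hx ihx => rw [star_smul]; exact Submodule.smul_mem M _ ihx
  have hMfin : FiniteDimensional ℂ ↥M :=
    FiniteDimensional.span_of_finite ℂ ((Fbar.finite_toSet).image _)
  refine ⟨Fbar, hFsub, hwfbar, hmul, hstar, ?_⟩
  let S0 : NonUnitalSubalgebra ℂ A :=
    M.toNonUnitalSubalgebra (fun x y hx hy => hmul x hx y hy)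
  let S : NonUnitalStarSubalgebra ℂ A :=
    { S0 with star_mem' := fun {x} hx => hstar x hx }
  have hScarrier : ∀ a : A, a ∈ S ↔ a ∈ M := fun a => Iff.rfl
  refine ⟨S, ?_, fun x hx => (hScarrier _).mpr
    (Submodule.subset_span ⟨x, hFsub hx, rfl⟩)⟩
  let e : ↥M ≃ₗ[ℂ] ↥S :=
    { toFun := fun x => ⟨x.1, x.2⟩
      invFun := fun x => ⟨x.1, x.2⟩
      left_inv := fun _ => rfl
      right_inv := fun _ => rfl
      map_add' := fun _ _ => rfl
      map_smul' := fun _ _ => rfl }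
  exact Module.Finite.equiv e
end
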